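/- Let u_L, u_R be real numbers, f : ℝ → ℝ^d a continuously differentiable flux, n a unit vector, and λ ≥ max over ω ∈ [0,1] of |f'(ωu_R + (1-ω)u_L)·n|, with λ > 0. Then the bar state ū = (u_L + u_R)/2 - (n·(f(u_R) - f(u_L)))/(2λ) satisfies min(u_L,u_R) ≤ ū ≤ max(u_L,u_R). -/

import Mathlib

open scoped RealInnerProductSpace

/-- Bar-state bounds for the local Lax–Friedrichs flux. -/
theorem bar_state_bounds (d : ℕ) (uL uR : ℝ)
    (f : ℝ → EuclideanSpace ℝ (Fin d)) (hf : ContDiff ℝ 1 f)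
    (n : EuclideanSpace ℝ (Fin d)) (hn : ‖n‖ = 1)
    (lam : ℝ) (hlam : 0 < lam)
    (hbound : ∀ ω ∈ Set.Icc (0:ℝ) 1,
      |(⟪deriv f (ω * uR + (1 - ω) * uL), n⟫ : ℝ)| ≤ lam) :
    min uL uR ≤ (uL + uR) / 2 - ⟪f uR - f uL, n⟫ / (2 * lam) ∧
      (uL + uR) / 2 - ⟪f uR - f uL, n⟫ / (2 * lam) ≤ max uL uR := by
  set h : ℝ → ℝ := fun t => ⟪f t, n⟫ with hh
  have hdf : Differentiable ℝ f := hf.differentiable one_ne_zero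
  have hder : ∀ t : ℝ, HasDerivAt h (⟪deriv f t, n⟫) t := by
    intro t
    have h1 : HasDerivAt f (deriv f t) t := (hdf t).hasDerivAt
    have h2 : HasDerivAt (fun s => (⟪n, f s⟫ : ℝ)) (⟪n, deriv f t⟫ : ℝ) t :=
      ((innerSL ℝ n).hasFDerivAt (x := f t)).comp_hasDerivAt t h1
    have e1 : (fun s => (⟪n, f s⟫ : ℝ)) = h := funext fun s => real_inner_comm _ _
    rw [e1] at h2
    rw [show (⟪n, deriv f t⟫ : ℝ) = ⟪deriv f t, n⟫ from real_inner_comm _ _] at h2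
    exact h2
  have key : |h uR - h uL| ≤ lam * |uR - uL| := by
    have hconv : Convex ℝ (Set.uIcc uL uR) := convex_uIcc uL uR
    have hbd : ∀ x ∈ Set.uIcc uL uR, ‖(⟪deriv f x, n⟫ : ℝ)‖ ≤ lam := by
      intro x hx
      rw [← segment_eq_uIcc] at hx
      obtain ⟨a, b, ha, hb, hab, hx⟩ := hx
      have hb1 : b ≤ 1 := by linarith
      have ha' : a = 1 - b := by linarith
      rw [ha'] at hx
      simp only [smul_eq_mul] at hx
      have hx' : b * uR + (1 - b) * uL = x := by linarith
      have := hbound b ⟨hb, hb1⟩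
      rw [hx'] at this
      simpa [Real.norm_eq_abs] using this
    have := hconv.norm_image_sub_le_of_norm_hasDerivWithin_le
      (f' := fun t => (⟪deriv f t, n⟫ : ℝ))
      (fun x _ => (hder x).hasDerivWithinAt) hbd
      (Set.left_mem_uIcc) (Set.right_mem_uIcc)
    simpa [Real.norm_eq_abs] using this
  have heq : (⟪f uR - f uL, n⟫ : ℝ) = h uR - h uL := by
    simp [hh, inner_sub_left]
  rw [heq]
  have habs : |(h uR - h uL) / (2 * lam)| ≤ |uR - uL| / 2 := by
    rw [abs_div, abs_of_pos (by linarith : (0:ℝ) < 2 * lam),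
      div_le_div_iff₀ (by linarith) (by norm_num : (0:ℝ) < 2)]
    nlinarith [key]
  obtain ⟨a1, a2⟩ := abs_le.mp habs
  rcases le_total uL uR with hle | hle
  · rw [abs_of_nonneg (by linarith)] at a1 a2
    rw [min_eq_left hle, max_eq_right hle]
    constructor <;> linarith
  · rw [abs_of_nonpos (by linarith)] at a1 a2
    rw [min_eq_right hle, max_eq_left hle]
    constructor <;> linarith
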